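/- arXiv:0811.3892 — 2 statements merged into one kernel-verified Lean document; each statement's English description precedes it below -/
import Mathlib

section
/- Let L be the A_{N−1} root lattice, i.e. the integer vectors in ℤ^N with coordinate sum zero, with the standard inner product. Then the set S_L = { α ∈ L : γ·γ ≥ γ·α for all γ ∈ L } is exactly the set of vectors in L all of whose coordinates lie in {−1, 0, 1}. -/
lemma abs_le_mul_self (x : ℤ) : |x| ≤ x * x := by
  rcases eq_or_ne x 0 with h | h
  · simp [h]
  · have h1 : 1 ≤ |x| := Int.one_le_abs h
    calc |x| = 1 * |x| := (one_mul _).symm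
    _ ≤ |x| * |x| := by exact mul_le_mul_of_nonneg_right h1 (abs_nonneg x)
    _ = x * x := abs_mul_abs_self x

lemma pair_sums {N : ℕ} (j k : Fin N) (hjk : j ≠ k) (α : Fin N → ℤ) :
    (∑ i, ((if i = j then (1:ℤ) else 0) - if i = k then 1 else 0)) = 0 ∧
    (∑ i, ((if i = j then (1:ℤ) else 0) - if i = k then 1 else 0) * α i) = α j - α k ∧
    (∑ i, ((if i = j then (1:ℤ) else 0) - if i = k then 1 else 0) *
        ((if i = j then (1:ℤ) else 0) - if i = k then 1 else 0)) = 2 := by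
  refine ⟨?_, ?_, ?_⟩
  · simp [Finset.sum_sub_distrib]
  · simp [sub_mul, Finset.sum_sub_distrib, ite_mul]
  · simp [sub_mul, mul_sub, Finset.sum_sub_distrib, ite_mul, mul_ite, hjk, Ne.symm hjk]

theorem small_vectors_A_lattice (N : ℕ) :
    {α : Fin N → ℤ | (∑ i, α i) = 0 ∧
        ∀ γ : Fin N → ℤ, (∑ i, γ i) = 0 → (∑ i, γ i * α i) ≤ ∑ i, γ i * γ i}
    = {α : Fin N → ℤ | (∑ i, α i) = 0 ∧ ∀ i, α i = -1 ∨ α i = 0 ∨ α i = 1} := by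
  ext α
  simp only [Set.mem_setOf_eq]
  constructor
  · rintro ⟨hsum, h⟩
    refine ⟨hsum, fun j => ?_⟩
    have key : ∀ k, k ≠ j → α j - α k ≤ 2 := by
      intro k hk
      obtain ⟨h1, h2, h3⟩ := pair_sums j k (Ne.symm hk) α
      have := h _ h1
      rw [h2, h3] at this
      exact this
    by_contra hj
    push_neg at hj
    obtain ⟨e1, e2, e3⟩ := hj
    rcases lt_or_gt_of_ne e2 with hlt | hgt
    · -- α j ≤ -2
      have hj2 : α j ≤ -2 := by omega
      have hall : ∀ k, α k ≤ 0 := by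
        intro k
        rcases eq_or_ne k j with rfl | hk
        · omega
        · have := key k hk
          -- need α k - α j ≤ 2, i.e. swap roles
          obtain ⟨h1, h2, h3⟩ := pair_sums k j hk α
          have := h _ h1
          rw [h2, h3] at this
          omega
      have hsplit : α j + ∑ i ∈ Finset.univ.erase j, α i = ∑ i, α i :=
        Finset.add_sum_erase _ α (Finset.mem_univ j)
      have hrest : (∑ i ∈ Finset.univ.erase j, α i) ≤ 0 :=
        Finset.sum_nonpos (fun i _ => hall i)
      omega
    · -- α j ≥ 2
      have hj2 : 2 ≤ α j := by omega
      have hall : ∀ k, 0 ≤ α k := by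
        intro k
        rcases eq_or_ne k j with rfl | hk
        · omega
        · have := key k hk
          omega
      have hsplit : α j + ∑ i ∈ Finset.univ.erase j, α i = ∑ i, α i :=
        Finset.add_sum_erase _ α (Finset.mem_univ j)
      have hrest : 0 ≤ (∑ i ∈ Finset.univ.erase j, α i) :=
        Finset.sum_nonneg (fun i _ => hall i)
      omega
  · rintro ⟨hsum, h⟩
    refine ⟨hsum, fun γ _ => ?_⟩
    apply Finset.sum_le_sum
    intro i _
    have habs : |γ i| ≤ γ i * γ i := abs_le_mul_self (γ i)
    rcases h i with hi | hi | hi <;> rw [hi]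
    · rw [mul_neg_one]
      linarith [neg_abs_le (γ i)]
    · rw [mul_zero]
      exact mul_self_nonneg _
    · rw [mul_one]
      linarith [le_abs_self (γ i)]
end

section
/- Let L be a positive-definite integral lattice (a free ℤ-module of finite rank with a positive-definite symmetric ℤ-valued bilinear form). Then the set S_L = { α ∈ L : γ·γ ≥ γ·α for all γ ∈ L } is finite. -/
theorem small_vectors_finite (L : Type*) [AddCommGroup L] [Module ℤ L]
    [Module.Free ℤ L] [Module.Finite ℤ L]
    (B : L →ₗ[ℤ] L →ₗ[ℤ] ℤ)
    (hsymm : ∀ x y : L, B x y = B y x)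
    (hpos : ∀ x : L, x ≠ 0 → 0 < B x x) :
    {α : L | ∀ γ : L, B γ α ≤ B γ γ}.Finite := by
  classical
  set S := {α : L | ∀ γ : L, B γ α ≤ B γ γ} with hS
  let b := Module.Free.chooseBasis ℤ L
  let f : L → (Module.Free.ChooseBasisIndex ℤ L) → ℤ := fun α i => B (b i) α
  have hinj : Function.Injective f := by
    intro α β h
    have hz : ∀ i, B (b i) (α - β) = 0 := by
      intro i
      have h1 : B (b i) α = B (b i) β := congrFun h i
      rw [map_sub, h1, sub_self]
    have hall : ∀ γ, B γ (α - β) = 0 := by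
      have hflip : B.flip (α - β) = 0 := by
        apply b.ext
        intro i
        simp only [LinearMap.flip_apply, LinearMap.zero_apply]
        exact hz i
      intro γ
      have := LinearMap.congr_fun hflip γ
      simpa using this
    by_contra hne
    have hd : α - β ≠ 0 := sub_ne_zero.mpr hne
    have := hpos _ hd
    rw [hall (α - β)] at this
    exact lt_irrefl 0 this
  have hsub : f '' S ⊆ Set.pi Set.univ
      (fun i => Set.Icc (-(B (b i) (b i))) (B (b i) (b i))) := by
    rintro v ⟨α, hα, rfl⟩ i _
    constructor
    · have h1 := hα (-(b i))
      simp only [map_neg, LinearMap.neg_apply, neg_neg] at h1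
      linarith
    · exact hα (b i)
  have hfin : (f '' S).Finite :=
    Set.Finite.subset (Set.Finite.pi fun i => Set.finite_Icc _ _) hsub
  exact Set.Finite.of_finite_image hfin hinj.injOn
end
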